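/- The function Θ(s) = s·ln(s)/(s-1), extended by Θ(1) = 1, satisfies all contractor conditions: it is strictly increasing on (0,∞), Θ(1) = 1, Θ'(1) = 1/2 < 1, (Θ(s) - s)(s - 1) < 0 for all s ≠ 1, Θ(s) → 0 as s → 0⁺, and Θ(s) → ∞ as s → ∞. -/

import Mathlib

open Real Filter Set Topology

private lemma theta_deriv_ne_one {x : ℝ} (hx0 : x ≠ 0) (hx1 : x ≠ 1) :
    HasDerivAt (fun s : ℝ => if s = 1 then 1 else s * Real.log s / (s - 1))
      ((x - 1 - Real.log x) / (x - 1) ^ 2) x := by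
  have hx1' : x - 1 ≠ 0 := sub_ne_zero.mpr hx1
  have h1 : HasDerivAt (fun s : ℝ => s * Real.log s) (Real.log x + 1) x := by
    have := (hasDerivAt_id x).mul (Real.hasDerivAt_log hx0)
    simpa [mul_inv_cancel₀ hx0, add_comm, Pi.mul_def] using this
  have h2 : HasDerivAt (fun s : ℝ => s - 1) 1 x := (hasDerivAt_id x).sub_const 1
  have h3 : HasDerivAt (fun s : ℝ => s * Real.log s / (s - 1)) _ x := h1.div h2 hx1'
  have h4 : HasDerivAt (fun s : ℝ => s * Real.log s / (s - 1))
      ((x - 1 - Real.log x) / (x - 1) ^ 2) x := by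
    convert h3 using 1
    field_simp
    ring
  apply h4.congr_of_eventuallyEq
  filter_upwards [isOpen_ne.mem_nhds hx1] with s hs
  simp [if_neg hs]

private lemma theta_deriv_one :
    HasDerivAt (fun s : ℝ => if s = 1 then 1 else s * Real.log s / (s - 1)) (1/2) 1 := by
  rw [hasDerivAt_iff_tendsto_slope]
  have hne : ∀ᶠ s : ℝ in 𝓝[≠] (1:ℝ), s ≠ 1 := eventually_mem_nhdsWithin
  have hpos : ∀ᶠ s : ℝ in 𝓝[≠] (1:ℝ), (0:ℝ) < s := by
    filter_upwards [nhdsWithin_le_nhds (Ioo_mem_nhds (by norm_num : (1:ℝ)/2 < 1)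
      (by norm_num : (1:ℝ) < 3/2))] with s hs
    exact lt_trans (by norm_num) hs.1
  -- L'Hopital for f(s) = s log s - (s-1), g(s) = (s-1)^2
  have hlh : Tendsto (fun s : ℝ => (s * Real.log s - (s - 1)) / (s - 1) ^ 2)
      (𝓝[≠] (1:ℝ)) (𝓝 (1/2)) := by
    apply HasDerivAt.lhopital_zero_nhdsNE (f' := fun s => Real.log s)
      (g' := fun s => 2 * (s - 1))
    · filter_upwards [hpos] with s hs
      have h1 : HasDerivAt (fun t : ℝ => t * Real.log t) (Real.log s + 1) s := by
        have := (hasDerivAt_id s).mul (Real.hasDerivAt_log hs.ne')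
        simpa [mul_inv_cancel₀ hs.ne', add_comm, Pi.mul_def] using this
      simpa [Pi.sub_def] using h1.sub ((hasDerivAt_id s).sub_const 1)
    · filter_upwards with s
      have : HasDerivAt (fun t : ℝ => (t - 1) ^ 2) (2 * (s - 1) ^ 1 * 1) s :=
        ((hasDerivAt_id s).sub_const 1).pow 2
      simpa using this
    · filter_upwards [hne] with s hs
      have : s - 1 ≠ 0 := sub_ne_zero.mpr hs
      positivity
    · have : Tendsto (fun s : ℝ => s * Real.log s - (s - 1)) (𝓝 (1:ℝ))
          (𝓝 (1 * Real.log 1 - (1 - 1))) :=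
        (Real.continuous_mul_log.tendsto 1).sub (continuous_id.sub continuous_const).continuousAt
      simpa using this.mono_left nhdsWithin_le_nhds
    · have : Tendsto (fun s : ℝ => (s - 1) ^ 2) (𝓝 (1:ℝ)) (𝓝 (((1:ℝ) - 1) ^ 2)) :=
        (((continuous_id.sub continuous_const).pow 2).tendsto 1)
      simpa using this.mono_left nhdsWithin_le_nhds
    · -- log s / (2 (s-1)) → 1/2
      have hslope : Tendsto (slope Real.log 1) (𝓝[≠] (1:ℝ)) (𝓝 1) := by
        have := (Real.hasDerivAt_log one_ne_zero)
        rw [hasDerivAt_iff_tendsto_slope] at this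
        simpa using this
      have := hslope.const_mul (1/2 : ℝ)
      rw [mul_one] at this
      apply this.congr'
      filter_upwards [hne] with s hs
      have h1 : s - 1 ≠ 0 := sub_ne_zero.mpr hs
      simp only [slope_def_field, div_eq_iff h1, Real.log_one, sub_zero]
      field_simp
  apply hlh.congr'
  filter_upwards [hne] with s hs
  have h1 : s - 1 ≠ 0 := sub_ne_zero.mpr hs
  simp only [slope_def_field, if_neg hs, if_pos rfl, ↓reduceIte]
  rw [div_eq_div_iff (by positivity) h1]
  field_simp

theorem stmt_9 :
    let Θ : ℝ → ℝ := fun s => if s = 1 then 1 else s * Real.log s / (s - 1)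
    StrictMonoOn Θ (Set.Ioi (0 : ℝ)) ∧
    Θ 1 = 1 ∧
    (HasDerivAt Θ (1/2) 1 ∧ (1:ℝ)/2 < 1) ∧
    (∀ s : ℝ, 0 < s → s ≠ 1 → (Θ s - s) * (s - 1) < 0) ∧
    Filter.Tendsto Θ (nhdsWithin 0 (Set.Ioi 0)) (nhds 0) ∧
    Filter.Tendsto Θ Filter.atTop Filter.atTop := by
  intro Θ
  have hΘdef : ∀ s : ℝ, s ≠ 1 → Θ s = s * Real.log s / (s - 1) := fun s hs => if_neg hs
  have hdiff : ∀ x : ℝ, 0 < x → ∃ d : ℝ, 0 < d ∧ HasDerivAt Θ d x := by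
    intro x hx
    rcases eq_or_ne x 1 with rfl | hx1
    · exact ⟨1/2, by norm_num, theta_deriv_one⟩
    · refine ⟨(x - 1 - Real.log x) / (x - 1) ^ 2, ?_, theta_deriv_ne_one hx.ne' hx1⟩
      have h1 : Real.log x < x - 1 := Real.log_lt_sub_one_of_pos hx hx1
      have h2 : (0:ℝ) < (x - 1) ^ 2 := by
        have : x - 1 ≠ 0 := sub_ne_zero.mpr hx1
        positivity
      exact div_pos (by linarith) h2
  refine ⟨?_, if_pos rfl, ⟨theta_deriv_one, by norm_num⟩, ?_, ?_, ?_⟩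
  · -- StrictMonoOn
    apply strictMonoOn_of_deriv_pos (convex_Ioi 0)
    · intro x hx
      obtain ⟨d, _, hd⟩ := hdiff x hx
      exact hd.continuousAt.continuousWithinAt
    · intro x hx
      rw [interior_Ioi] at hx
      obtain ⟨d, hdpos, hd⟩ := hdiff x hx
      rwa [hd.deriv]
  · -- sign condition
    intro s hs hs1
    have h1 : s - 1 ≠ 0 := sub_ne_zero.mpr hs1
    have h2 : Real.log s < s - 1 := Real.log_lt_sub_one_of_pos hs hs1
    rw [hΘdef s hs1]
    have : (s * Real.log s / (s - 1) - s) * (s - 1) = s * (Real.log s - (s - 1)) := by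
      field_simp
    rw [this]
    exact mul_neg_of_pos_of_neg hs (by linarith)
  · -- limit at 0+
    have h1 : Tendsto (fun s : ℝ => s * Real.log s / (s - 1)) (𝓝[>] (0:ℝ)) (𝓝 0) := by
      have hnum : Tendsto (fun s : ℝ => s * Real.log s) (𝓝[>] (0:ℝ)) (𝓝 0) := by
        have := Real.continuous_mul_log.tendsto 0
        simpa using this.mono_left nhdsWithin_le_nhds
      have hden : Tendsto (fun s : ℝ => s - 1) (𝓝[>] (0:ℝ)) (𝓝 (-1)) := by
        have : Tendsto (fun s : ℝ => s - 1) (𝓝 (0:ℝ)) (𝓝 ((0:ℝ) - 1)) :=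
          (continuous_id.sub continuous_const).continuousAt
        simpa using this.mono_left nhdsWithin_le_nhds
      simpa [Pi.div_def] using hnum.div hden (by norm_num)
    apply h1.congr'
    filter_upwards [Ioo_mem_nhdsGT_of_mem (by norm_num : (0:ℝ) ∈ Ico 0 1)] with s hs
    exact (hΘdef s hs.2.ne).symm
  · -- limit at infinity
    apply tendsto_atTop_mono' _ _ Real.tendsto_log_atTop
    filter_upwards [eventually_ge_atTop (2:ℝ)] with s hs
    have hs1 : (1:ℝ) < s := by linarith
    have hlog : 0 ≤ Real.log s := Real.log_nonneg (by linarith)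
    rw [hΘdef s hs1.ne', le_div_iff₀ (by linarith)]
    nlinarith
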